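/- There exists an uncountable family of W-subshifts X ⊆ {0,1}^ℤ none of which is sofic and none of which is strongly irreducible. Concretely, for σ ∈ {2,4}^ℕ set S(σ) = {1 + σ(0) + ⋯ + σ(n−1) : n ∈ ℕ} and let X_σ ⊆ {0,1}^ℤ consist of all x such that no word of the form 01^m0 with m ∈ ℕ \ S(σ) appears in x. Then the map σ ↦ X_σ is injective, each X_σ is a W-subshift (with n₀ = 3), each X_σ is not topologically mixing (hence not strongly irreducible), and only countably many of the X_σ are sofic. -/

import Mathlib

/-- The shift action of `ℤ` on configurations `x : ℤ → A`: `(n • x)(m) = x(m - n)`. -/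
def shiftZ {A : Type*} (n : ℤ) (x : ℤ → A) : ℤ → A :=
  fun m => x (m - n)

/-- A subshift is a closed, shift-invariant subset of `A^ℤ` (with the prodiscrete
topology). -/
def IsSubshiftZ {A : Type*} [TopologicalSpace A] (X : Set (ℤ → A)) : Prop :=
  IsClosed X ∧ ∀ (n : ℤ) (x : ℤ → A), x ∈ X → shiftZ n x ∈ X

/-- A configuration is periodic if its orbit under the shift action is finite. -/
def IsPeriodicZ {A : Type*} (x : ℤ → A) : Prop :=
  (Set.range fun n : ℤ => shiftZ n x).Finite

/-- A subshift `X ⊆ A^ℤ` is strongly irreducible if there is a finite `Δ ⊆ ℤ` such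
that whenever `Ω₁, Ω₂` are finite subsets of `ℤ` with `(Ω₁ - Δ) ∩ Ω₂ = ∅`, any two
configurations of `X` can be glued along `Ω₁` and `Ω₂` inside `X`. -/
def IsStronglyIrreducibleZ {A : Type*} (X : Set (ℤ → A)) : Prop :=
  ∃ Δ : Finset ℤ, ∀ Ω₁ Ω₂ : Finset ℤ,
    (∀ a ∈ Ω₁, ∀ d ∈ Δ, a - d ∉ Ω₂) →
    ∀ x₁ ∈ X, ∀ x₂ ∈ X, ∃ x ∈ X,
      (∀ i ∈ Ω₁, x i = x₁ i) ∧ (∀ i ∈ Ω₂, x i = x₂ i)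

/-- The word `w` appears as a subword of the configuration `x : ℤ → A`. -/
def AppearsIn {A : Type*} (w : List A) (x : ℤ → A) : Prop :=
  ∃ i : ℤ, ∀ k : Fin w.length, x (i + (k.1 : ℤ)) = w.get k

/-- The language of `X ⊆ A^ℤ`: all finite words appearing in configurations of `X`. -/
def lang {A : Type*} (X : Set (ℤ → A)) : Set (List A) :=
  {w : List A | ∃ x ∈ X, AppearsIn w x}

/-- `X ⊆ A^ℤ` is irreducible if any two words of its language can be joined,
within the language, by some word. -/
def IrreducibleZ {A : Type*} (X : Set (ℤ → A)) : Prop :=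
  ∀ u ∈ lang X, ∀ v ∈ lang X, ∃ w : List A, u ++ w ++ v ∈ lang X

/-- `X ⊆ A^ℤ` is a W-subshift if there is `n₀ ≥ 0` such that any two words of its
language can be joined, within the language, by a word of length at most `n₀`. -/
def IsWSubshift {A : Type*} (X : Set (ℤ → A)) : Prop :=
  ∃ n₀ : ℕ, ∀ u ∈ lang X, ∀ v ∈ lang X,
    ∃ c ∈ lang X, c.length ≤ n₀ ∧ u ++ c ++ v ∈ lang X

/-- A subshift of `A^ℤ` is of finite type if it is defined by a finite window `Ω` and
a set of allowed patterns `P ⊆ A^Ω`. -/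
def IsOfFiniteTypeZ {A : Type*} (X : Set (ℤ → A)) : Prop :=
  ∃ (Ω : Finset ℤ) (P : Set ({i : ℤ // i ∈ Ω} → A)),
    X = {x : ℤ → A | ∀ n : ℤ, (fun w : {i : ℤ // i ∈ Ω} => shiftZ n x w.1) ∈ P}

/-- A subshift `X ⊆ A^ℤ` is sofic if it is the image of a subshift of finite type
`Y ⊆ B^ℤ` (over a finite alphabet `B`, with its prodiscrete topology) under a
surjective continuous shift-equivariant map. -/
def IsSoficZ {A : Type*} [TopologicalSpace A] (X : Set (ℤ → A)) : Prop :=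
  ∃ (B : Type) (_ : Finite B) (Y : Set (ℤ → B)) (f : (ℤ → B) → (ℤ → A)),
    letI : TopologicalSpace B := ⊥
    IsSubshiftZ Y ∧ IsOfFiniteTypeZ Y ∧
      ContinuousOn f Y ∧ (∀ (n : ℤ), ∀ y ∈ Y, f (shiftZ n y) = shiftZ n (f y)) ∧
      f '' Y = X

/-- The periodic configuration `w^∞ ∈ A^ℤ` obtained by repeating a nonempty word `w`
bi-infinitely. -/
def perConfig {A : Type*} (w : List A) (hw : w ≠ []) : ℤ → A := fun i =>
  w.get ⟨(i % (w.length : ℤ)).toNat, by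
    have h0 : 0 < w.length := by
      cases w with
      | nil => exact absurd rfl hw
      | cons a t => exact Nat.succ_pos _
    have h1 : 0 ≤ i % (w.length : ℤ) :=
      Int.emod_nonneg _ (by exact_mod_cast h0.ne')
    have h2 : i % (w.length : ℤ) < (w.length : ℤ) :=
      Int.emod_lt_of_pos _ (by exact_mod_cast h0)
    omega⟩

/-- A subshift `X ⊆ A^ℤ` is topologically mixing if for every finite `Ω ⊆ ℤ` and
configurations `x₁, x₂ ∈ X` there is a finite `F ⊆ ℤ` such that for all `n ∉ F` some
configuration of `X` agrees with `x₁` on `Ω` and with `x₂` on `n + Ω`. -/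
def TopologicallyMixingZ {A : Type*} (X : Set (ℤ → A)) : Prop :=
  ∀ (Ω : Finset ℤ), ∀ x₁ ∈ X, ∀ x₂ ∈ X, ∃ F : Finset ℤ, ∀ n : ℤ, n ∉ F →
    ∃ x ∈ X, (∀ i ∈ Ω, x i = x₁ i) ∧ (∀ i ∈ Ω, x (n + i) = x₂ (n + i))

/-- `S(σ) = {1 + σ(0) + ⋯ + σ(n−1) : n ∈ ℕ}`. -/
def Ssig (σ : ℕ → ℕ) : Set ℕ :=
  {m : ℕ | ∃ n : ℕ, m = 1 + ∑ k ∈ Finset.range n, σ k}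

/-- The word `01^m0` appears in the configuration `x : ℤ → Bool`
(`false` stands for `0` and `true` for `1`). -/
def HasBlock (m : ℕ) (x : ℤ → Bool) : Prop :=
  ∃ i : ℤ, x i = false ∧ x (i + (m : ℤ) + 1) = false ∧
    ∀ j : ℤ, 0 < j → j ≤ (m : ℤ) → x (i + j) = true

/-- The subshift `X_σ ⊆ {0,1}^ℤ` of all configurations in which no word `01^m0` with
`m ∉ S(σ)` appears. -/
def Xsig (σ : ℕ → ℕ) : Set (ℤ → Bool) :=
  {x : ℤ → Bool | ∀ m : ℕ, m ∉ Ssig σ → ¬ HasBlock m x}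

namespace WP

/-- partial sums -/
def psum (σ : ℕ → ℕ) (n : ℕ) : ℕ := 1 + ∑ k ∈ Finset.range n, σ k

lemma psum_mem (σ : ℕ → ℕ) (n : ℕ) : psum σ n ∈ Ssig σ := ⟨n, rfl⟩

lemma one_mem_Ssig (σ : ℕ → ℕ) : 1 ∈ Ssig σ := ⟨0, by simp⟩

lemma psum_succ (σ : ℕ → ℕ) (n : ℕ) : psum σ (n+1) = psum σ n + σ n := by
  simp [psum, Finset.sum_range_succ]; omega

lemma mem_Ssig_iff (σ : ℕ → ℕ) (m : ℕ) : m ∈ Ssig σ ↔ ∃ n, m = psum σ n := Iff.rfl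

lemma psum_mono (σ : ℕ → ℕ) (hσ : ∀ n, σ n = 2 ∨ σ n = 4) {a b : ℕ} (h : a ≤ b) :
    psum σ a ≤ psum σ b := by
  induction h with
  | refl => exact le_refl _
  | step h ih => exact le_trans ih (by rw [psum_succ]; omega)

lemma odd_of_mem_Ssig (σ : ℕ → ℕ) (hσ : ∀ n, σ n = 2 ∨ σ n = 4) {m : ℕ}
    (hm : m ∈ Ssig σ) : Odd m := by
  obtain ⟨n, rfl⟩ := hm
  have : Even (∑ k ∈ Finset.range n, σ k) := by
    apply Finset.even_sum
    intro i _
    rcases hσ i with h|h <;> simp [h] <;> decide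
  obtain ⟨r, hr⟩ := this
  exact ⟨r, by omega⟩

lemma gap_lemma (σ : ℕ → ℕ) (hσ : ∀ n, σ n = 2 ∨ σ n = 4) (N : ℕ) :
    ∃ j ≤ 3, N + j ∈ Ssig σ := by
  have hlb : ∀ n, n < psum σ n := by
    intro n
    induction n with
    | zero => simp [psum]
    | succ n ih =>
      have := psum_succ σ n
      have := hσ n
      omega
  have hex : ∃ n, N ≤ psum σ n := ⟨N, (hlb N).le⟩
  classical
  obtain ⟨n, hNn, hminn⟩ : ∃ n, N ≤ psum σ n ∧ ∀ m < n, ¬ N ≤ psum σ m :=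
    ⟨Nat.find hex, Nat.find_spec hex, fun m hm => Nat.find_min hex hm⟩
  rcases Nat.eq_zero_or_pos n with h0|h0
  · have h1 : psum σ 0 = 1 := by simp [psum]
    rw [h0] at hNn; rw [h1] at hNn
    refine ⟨1 - N, by omega, ?_⟩
    have : N + (1 - N) = 1 := by omega
    rw [this]; exact one_mem_Ssig σ
  · obtain ⟨m, rfl⟩ : ∃ m, n = m + 1 := ⟨n - 1, by omega⟩
    have hlt : ¬ N ≤ psum σ m := hminn m (by omega)
    have hs := psum_succ σ m
    have hσm := hσ m
    refine ⟨psum σ (m+1) - N, by omega, ?_⟩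
    have : N + (psum σ (m+1) - N) = psum σ (m+1) := by omega
    rw [this]; exact psum_mem σ (m+1)

/-- configuration with zeros exactly at 0 and m+1 -/
def xblock (m : ℕ) : ℤ → Bool := fun i => if i = 0 ∨ i = (m : ℤ) + 1 then false else true

lemma xblock_eq_false {m : ℕ} {i : ℤ} (h : xblock m i = false) : i = 0 ∨ i = (m : ℤ) + 1 := by
  by_contra h'
  simp only [xblock, if_neg h'] at h
  exact absurd h (by simp)

lemma xblock_mem (σ : ℕ → ℕ) (m : ℕ) (hm : m ∈ Ssig σ) : xblock m ∈ Xsig σ := by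
  intro m' hm' ⟨i, h0, h1, _⟩
  have h0' := xblock_eq_false h0
  have h1' := xblock_eq_false h1
  have : m' = m := by omega
  exact hm' (this ▸ hm)

lemma xblock_hasBlock (m : ℕ) : HasBlock m (xblock m) := by
  refine ⟨0, ?_, ?_, ?_⟩
  · simp [xblock]
  · have : (0 : ℤ) + (m:ℤ) + 1 = (m:ℤ) + 1 := by ring
    rw [this]; simp [xblock]
  · intro j hj hj'
    have : ¬ ((0:ℤ) + j = 0 ∨ (0:ℤ) + j = (m:ℤ) + 1) := by omega
    simp only [xblock, if_neg this]

lemma injectivity (σ σ' : ℕ → ℕ) (hσ : ∀ n, σ n = 2 ∨ σ n = 4)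
    (hσ' : ∀ n, σ' n = 2 ∨ σ' n = 4) (h : Xsig σ = Xsig σ') : σ = σ' := by
  classical
  by_contra hne
  have hex : ∃ n, σ n ≠ σ' n := by
    by_contra h'
    push_neg at h'
    exact hne (funext h')
  -- main auxiliary: if at minimal difference point σ n = 2, σ' n = 4, contradiction
  -- we prove a general claim
  have key : ∀ (τ τ' : ℕ → ℕ), (∀ n, τ n = 2 ∨ τ n = 4) → (∀ n, τ' n = 2 ∨ τ' n = 4) →
      Xsig τ = Xsig τ' → ∀ n, (∀ k < n, τ k = τ' k) → τ n = 2 → τ' n = 4 → False := by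
    intro τ τ' hτ hτ' hX n hmin h2 h4
    have hps : ∀ j ≤ n, psum τ' j = psum τ j := by
      intro j hj
      unfold psum
      congr 1
      apply Finset.sum_congr rfl
      intro k hk
      simp only [Finset.mem_range] at hk
      exact (hmin k (by omega)).symm
    set m := psum τ n + 2 with hmdef
    have hmS : m ∈ Ssig τ := by
      have := psum_succ τ n
      rw [hmdef, ← h2]
      exact this ▸ psum_mem τ (n+1)
    have hmS' : m ∉ Ssig τ' := by
      rintro ⟨j, hj⟩
      rw [show (1 + ∑ k ∈ Finset.range j, τ' k) = psum τ' j from rfl] at hj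
      rcases Nat.lt_or_ge j (n+1) with h'|h'
      · have := hps j (by omega)
        have := psum_mono τ hτ (show j ≤ n by omega)
        omega
      · have h1 : psum τ' (n+1) = psum τ' n + τ' n := psum_succ τ' n
        have h2' : psum τ' n = psum τ n := hps n le_rfl
        have := psum_mono τ' hτ' h'
        omega
    have hx : xblock m ∈ Xsig τ' := hX ▸ xblock_mem τ m hmS
    exact hx m hmS' (xblock_hasBlock m)
  obtain ⟨n, hspec, hmin'⟩ : ∃ n, σ n ≠ σ' n ∧ ∀ k < n, ¬ σ k ≠ σ' k :=
    ⟨Nat.find hex, Nat.find_spec hex, fun k hk => Nat.find_min hex hk⟩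
  have hmin : ∀ k < n, σ k = σ' k := by
    intro k hk
    have := hmin' k hk
    omega
  rcases hσ n with h2|h4
  · exact key σ σ' hσ hσ' h n hmin h2 (by rcases hσ' n with h'|h' <;> omega)
  · exact key σ' σ hσ' hσ h.symm n (fun k hk => (hmin k hk).symm)
      (by rcases hσ' n with h'|h' <;> omega) h4

end WP
namespace WP

/-! ### Subshift property -/

lemma shift_shift (n : ℤ) (x : ℤ → Bool) : shiftZ (-n) (shiftZ n x) = x := by
  funext m
  simp [shiftZ]

lemma hasBlock_shift_of {m : ℕ} {x : ℤ → Bool} (n : ℤ) (h : HasBlock m x) :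
    HasBlock m (shiftZ n x) := by
  obtain ⟨i, h0, h1, h2⟩ := h
  refine ⟨i + n, ?_, ?_, ?_⟩
  · simpa [shiftZ] using h0
  · have : i + n + (m:ℤ) + 1 - n = i + (m:ℤ) + 1 := by ring
    simp only [shiftZ, this]; exact h1
  · intro j hj hj'
    have : i + n + j - n = i + j := by ring
    simp only [shiftZ, this]; exact h2 j hj hj'

lemma Xsig_shift_invariant (σ : ℕ → ℕ) (n : ℤ) (x : ℤ → Bool) (hx : x ∈ Xsig σ) :
    shiftZ n x ∈ Xsig σ := by
  intro m hm hB
  have : HasBlock m x := by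
    have := hasBlock_shift_of (-n) hB
    rwa [shift_shift] at this
  exact hx m hm this

lemma Xsig_closed (σ : ℕ → ℕ) : IsClosed (Xsig σ) := by
  rw [← isOpen_compl_iff, isOpen_iff_forall_mem_open]
  intro x hx
  simp only [Set.mem_compl_iff, Xsig, Set.mem_setOf_eq] at hx
  push_neg at hx
  obtain ⟨m, hm, i, h0, h1, h2⟩ := hx
  refine ⟨⋂ k ∈ (Finset.Icc i (i + (m:ℤ) + 1) : Finset ℤ), {y : ℤ → Bool | y k = x k},
    ?_, ?_, ?_⟩
  · intro y hy
    simp only [Set.mem_iInter] at hy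
    have hagree : ∀ k : ℤ, i ≤ k → k ≤ i + (m:ℤ) + 1 → y k = x k := by
      intro k hk hk'
      exact hy k (Finset.mem_Icc.mpr ⟨hk, hk'⟩)
    intro hyX
    refine hyX m hm ⟨i, ?_, ?_, ?_⟩
    · rw [hagree i le_rfl (by omega)]; exact h0
    · rw [hagree (i + (m:ℤ) + 1) (by omega) le_rfl]; exact h1
    · intro j hj hj'
      rw [hagree (i + j) (by omega) (by omega)]; exact h2 j hj hj'
  · refine isOpen_biInter_finset (fun k _ => ?_)
    have : {y : ℤ → Bool | y k = x k} = (fun y : ℤ → Bool => y k) ⁻¹' {x k} := rfl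
    rw [this]
    exact IsOpen.preimage (continuous_apply k) (isOpen_discrete _)
  · simp

lemma Xsig_isSubshift (σ : ℕ → ℕ) : IsSubshiftZ (Xsig σ) :=
  ⟨Xsig_closed σ, fun n x hx => Xsig_shift_invariant σ n x hx⟩

/-! ### word machinery -/

def GoodWord (σ : ℕ → ℕ) (w : List Bool) : Prop :=
  ∀ a b : ℕ, a < b → b < w.length → w.getD a true = false → w.getD b true = false →
    (∀ k, a < k → k < b → w.getD k true = true) → (b - a - 1) ∈ Ssig σ

/-- embed a word into a bi-infinite configuration, padding with `true` -/
def embed (w : List Bool) : ℤ → Bool := fun i =>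
  if 0 ≤ i then w.getD i.toNat true else true

lemma embed_false {w : List Bool} {i : ℤ} (h : embed w i = false) :
    0 ≤ i ∧ i.toNat < w.length ∧ w.getD i.toNat true = false := by
  by_cases h0 : 0 ≤ i
  · simp only [embed, if_pos h0] at h
    refine ⟨h0, ?_, h⟩
    by_contra h'
    rw [List.getD_eq_default w true (by omega)] at h
    exact absurd h (by simp)
  · simp only [embed, if_neg h0] at h
    exact absurd h (by simp)

lemma good_of_lang (σ : ℕ → ℕ) (w : List Bool) (hw : w ∈ lang (Xsig σ)) :
    GoodWord σ w := by
  obtain ⟨x, hx, i, hi⟩ := hw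
  intro a b hab hb ha0 hb0 hbet
  by_contra hS
  refine hx (b - a - 1) hS ⟨i + (a:ℤ), ?_, ?_, ?_⟩
  · have ha' : a < w.length := by omega
    have := hi ⟨a, ha'⟩
    rw [List.getD_eq_getElem w true ha'] at ha0
    rw [this]
    exact ha0
  · have hm : (↑(b - a - 1) : ℤ) = (b:ℤ) - a - 1 := by push_cast; omega
    have heq : i + (a:ℤ) + ((b:ℤ) - a - 1) + 1 = i + (b:ℤ) := by ring
    rw [hm, heq]
    have := hi ⟨b, hb⟩
    rw [List.getD_eq_getElem w true hb] at hb0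
    rw [this]; exact hb0
  · intro j hj hj'
    have hm : (↑(b - a - 1) : ℤ) = (b:ℤ) - a - 1 := by push_cast; omega
    rw [hm] at hj'
    set k : ℕ := a + j.toNat with hk
    have hjk : (k : ℤ) = (a:ℤ) + j := by push_cast; omega
    have hk1 : a < k := by omega
    have hk2 : k < b := by omega
    have hkl : k < w.length := by omega
    have := hi ⟨k, hkl⟩
    have heq : i + (a:ℤ) + j = i + (k:ℤ) := by omega
    rw [heq, this]
    have := hbet k hk1 hk2
    rw [List.getD_eq_getElem w true hkl] at this
    exact this

lemma embed_mem (σ : ℕ → ℕ) (w : List Bool) (hw : GoodWord σ w) :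
    embed w ∈ Xsig σ := by
  intro m hm ⟨i, h0, h1, h2⟩
  obtain ⟨hi0, hilen, hival⟩ := embed_false h0
  obtain ⟨hj0, hjlen, hjval⟩ := embed_false h1
  set a := i.toNat with ha
  set b := (i + (m:ℤ) + 1).toNat with hb
  have hab : a < b := by omega
  have hba : b - a - 1 = m := by omega
  refine hm ?_
  rw [← hba]
  refine hw a b hab hjlen hival hjval ?_
  intro k hk1 hk2
  have hj : (0:ℤ) < (k:ℤ) - i ∧ (k:ℤ) - i ≤ (m:ℤ) := by omega
  have := h2 ((k:ℤ) - i) hj.1 hj.2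
  have heq : i + ((k:ℤ) - i) = (k:ℤ) := by ring
  rw [heq] at this
  have : embed w (k:ℤ) = true := this
  simp only [embed, if_pos (by positivity : (0:ℤ) ≤ (k:ℤ))] at this
  rwa [Int.toNat_natCast] at this

lemma embed_appears (w : List Bool) : AppearsIn w (embed w) := by
  refine ⟨0, ?_⟩
  intro k
  simp only [zero_add, embed, if_pos (by positivity : (0:ℤ) ≤ ((k:ℕ):ℤ))]
  rw [Int.toNat_natCast]
  rw [List.getD_eq_getElem w true k.2]
  rfl

lemma lang_iff_good (σ : ℕ → ℕ) (w : List Bool) :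
    w ∈ lang (Xsig σ) ↔ GoodWord σ w :=
  ⟨good_of_lang σ w, fun h => ⟨embed w, embed_mem σ w h, embed_appears w⟩⟩

end WP
namespace WP

/-! ### W property -/

lemma len_urv (u v : List Bool) (j : ℕ) :
    (u ++ List.replicate j true ++ v).length = u.length + j + v.length := by
  simp [List.length_append, List.length_replicate]
  omega

lemma getD_urv (u v : List Bool) (j k : ℕ) :
    (u ++ List.replicate j true ++ v).getD k true =
      if k < u.length then u.getD k true
      else if k < u.length + j then true
      else v.getD (k - u.length - j) true := by
  have hlr : (u ++ List.replicate j true).length = u.length + j := by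
    simp [List.length_append, List.length_replicate]
  split_ifs with h1 h2
  · rw [List.getD_append _ _ _ k (by rw [hlr]; omega), List.getD_append _ _ _ k h1]
  · rw [List.getD_append _ _ _ k (by rw [hlr]; omega),
      List.getD_append_right _ _ _ k (by omega)]
    have hkj : k - u.length < j := by omega
    rw [List.getD_eq_getElem _ _ (by simpa using hkj), List.getElem_replicate]
  · rw [List.getD_append_right _ _ _ k (by rw [hlr]; omega)]
    congr 1
    rw [hlr]
    omega

lemma good_replicate (σ : ℕ → ℕ) (j : ℕ) : GoodWord σ (List.replicate j true) := by
  intro a b hab hb ha0 _ _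
  exfalso
  rw [List.getD_eq_getElem _ _ (by simp at hb ⊢; omega), List.getElem_replicate] at ha0
  exact absurd ha0 (by simp)

lemma good_glue (σ : ℕ → ℕ) (u v : List Bool) (j : ℕ)
    (hu : GoodWord σ u) (hv : GoodWord σ v)
    (hcross : ∀ a b : ℕ, a < u.length → u.length + j ≤ b → b < u.length + j + v.length →
      u.getD a true = false → v.getD (b - u.length - j) true = false →
      (∀ k, a < k → k < u.length → u.getD k true = true) →
      (∀ k, k < b - u.length - j → v.getD k true = true) →
      (b - a - 1) ∈ Ssig σ) :
    GoodWord σ (u ++ List.replicate j true ++ v) := by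
  intro a b hab hb ha0 hb0 hbet
  rw [len_urv] at hb
  set L := u.length with hL
  set M := L + j with hM
  have hpos : ∀ k : ℕ, k < L + j + v.length →
      (u ++ List.replicate j true ++ v).getD k true = false →
      (k < L ∧ u.getD k true = false) ∨ (M ≤ k ∧ v.getD (k - L - j) true = false) := by
    intro k hk h
    rw [getD_urv] at h
    split_ifs at h with h1 h2
    · exact Or.inl ⟨h1, h⟩
    · exact Or.inr ⟨by omega, h⟩
  have hbetw : ∀ k, a < k → k < b → (u ++ List.replicate j true ++ v).getD k true = true :=
    hbet
  rcases hpos a (by omega) ha0 with ⟨haL, hau⟩ | ⟨haM, hav⟩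
  · rcases hpos b hb hb0 with ⟨hbL, hbu⟩ | ⟨hbM, hbv⟩
    · -- block inside u
      refine hu a b hab hbL hau hbu ?_
      intro k hk1 hk2
      have := hbetw k hk1 (by omega)
      rwa [getD_urv, if_pos (by omega)] at this
    · -- crossing block
      refine hcross a b haL hbM (by omega) hau hbv ?_ ?_
      · intro k hk1 hk2
        have := hbetw k hk1 (by omega)
        rwa [getD_urv, if_pos (by omega)] at this
      · intro k hk
        have := hbetw (k + M) (by omega) (by omega)
        rw [getD_urv, if_neg (by omega), if_neg (by omega)] at this
        have he : k + M - L - j = k := by omega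
        rwa [he] at this
  · -- block inside v
    have hbM : M ≤ b := by omega
    rcases hpos b hb hb0 with ⟨hbL, _⟩ | ⟨_, hbv⟩
    · omega
    · have hres := hv (a - M) (b - M) (by omega) (by omega)
        (by have he : a - L - j = a - M := by omega
            rwa [he] at hav)
        (by have he : b - L - j = b - M := by omega
            rwa [he] at hbv)
        (by intro k hk1 hk2
            have := hbetw (k + M) (by omega) (by omega)
            rw [getD_urv, if_neg (by omega), if_neg (by omega)] at this
            have he : k + M - L - j = k := by omega
            rwa [he] at this)
      have he : b - M - (a - M) - 1 = b - a - 1 := by omega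
      rwa [he] at hres

lemma W_key (σ : ℕ → ℕ) (hσ : ∀ n, σ n = 2 ∨ σ n = 4) (u v : List Bool)
    (hu : GoodWord σ u) (hv : GoodWord σ v) :
    ∃ j ≤ 3, GoodWord σ (u ++ List.replicate j true ++ v) := by
  classical
  by_cases hA : ∃ a, u.getD a true = false
  · by_cases hB : ∃ b, v.getD b true = false
    · obtain ⟨a0, ha0⟩ := hA
      have ha0l : a0 < u.length := by
        by_contra h
        rw [List.getD_eq_default _ _ (by omega)] at ha0
        exact absurd ha0 (by simp)
      set P : ℕ → Prop := fun a => u.getD a true = false with hP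
      have hPlen : ∀ k, P k → k < u.length := by
        intro k hk
        by_contra h
        rw [hP] at hk
        rw [List.getD_eq_default _ _ (by omega)] at hk
        exact absurd hk (by simp)
      set a' := Nat.findGreatest P u.length with ha'def
      have ha' : P a' := Nat.findGreatest_spec ha0l.le ha0
      have ha'max : ∀ k, a' < k → ¬ P k := by
        intro k hk hPk
        have := Nat.le_findGreatest (hPlen k hPk).le hPk
        omega
      have ha'len : a' < u.length := hPlen a' ha'
      obtain ⟨b', hb', hb'min⟩ : ∃ b', (v.getD b' true = false) ∧
          ∀ k < b', ¬ (v.getD k true = false) :=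
        ⟨Nat.find hB, Nat.find_spec hB, fun k hk => Nat.find_min hB hk⟩
      have hb'len : b' < v.length := by
        by_contra h
        rw [List.getD_eq_default _ _ (by omega)] at hb'
        exact absurd hb' (by simp)
      obtain ⟨j, hj3, hjS⟩ := gap_lemma σ hσ (u.length - 1 - a' + b')
      refine ⟨j, hj3, good_glue σ u v j hu hv ?_⟩
      intro a b haL hMb hblen ha0' hb0' hbetu hbetv
      have haa' : a = a' := by
        rcases lt_trichotomy a a' with h|h|h
        · have := hbetu a' h ha'len
          rw [hP] at ha'
          rw [this] at ha'
          exact absurd ha' (by simp)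
        · exact h
        · exact absurd ha0' (ha'max a h)
      have hbb' : b - u.length - j = b' := by
        rcases lt_trichotomy (b - u.length - j) b' with h|h|h
        · exact absurd hb0' (hb'min _ h)
        · exact h
        · have := hbetv b' h
          rw [this] at hb'
          exact absurd hb' (by simp)
      have : b - a - 1 = u.length - 1 - a' + b' + j := by omega
      rwa [this]
    · refine ⟨0, by omega, good_glue σ u v 0 hu hv ?_⟩
      intro a b _ _ _ _ hb0' _ _
      exact absurd ⟨b - u.length - 0, hb0'⟩ hB
  · refine ⟨0, by omega, good_glue σ u v 0 hu hv ?_⟩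
    intro a b _ _ _ ha0' _ _ _
    exact absurd ⟨a, ha0'⟩ hA

lemma W_prop (σ : ℕ → ℕ) (hσ : ∀ n, σ n = 2 ∨ σ n = 4) :
    ∀ u ∈ lang (Xsig σ), ∀ v ∈ lang (Xsig σ),
      ∃ c ∈ lang (Xsig σ), c.length ≤ 3 ∧ u ++ c ++ v ∈ lang (Xsig σ) := by
  intro u hu v hv
  rw [lang_iff_good] at hu hv
  obtain ⟨j, hj, hg⟩ := W_key σ hσ u v hu hv
  refine ⟨List.replicate j true, ?_, ?_, ?_⟩
  · rw [lang_iff_good]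
    exact good_replicate σ j
  · simpa using hj
  · rw [lang_iff_good]
    exact hg

end WP
namespace WP

/-! ### parity obstruction: not mixing, not strongly irreducible -/

lemma zero_dist (σ : ℕ → ℕ) (hσ : ∀ n, σ n = 2 ∨ σ n = 4) {x : ℤ → Bool}
    (hx : x ∈ Xsig σ) :
    ∀ d : ℕ, ∀ i j : ℤ, i < j → j - i = (d : ℤ) → x i = false → x j = false →
      (j - i) % 2 = 0 := by
  intro d
  induction d using Nat.strong_induction_on with
  | _ d ih =>
    intro i j hij hd hxi hxj
    by_cases hmid : ∃ k, i < k ∧ k < j ∧ x k = false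
    · obtain ⟨k, hk1, hk2, hk3⟩ := hmid
      have h1 := ih (k - i).toNat (by omega) i k hk1 (by omega) hxi hk3
      have h2 := ih (j - k).toNat (by omega) k j hk2 (by omega) hk3 hxj
      omega
    · push_neg at hmid
      set m := (j - i - 1).toNat with hm
      have hmz : (m : ℤ) = j - i - 1 := by omega
      have hB : HasBlock m x := by
        refine ⟨i, hxi, by rw [show i + (m:ℤ) + 1 = j by omega]; exact hxj, ?_⟩
        intro jj hjj1 hjj2
        cases h : x (i + jj) with
        | true => rfl
        | false => exact absurd h (hmid (i + jj) (by omega) (by omega))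
      have hmS : m ∈ Ssig σ := by
        by_contra hS
        exact hx m hS hB
      obtain ⟨r, hr⟩ := odd_of_mem_Ssig σ hσ hmS
      omega

/-- configuration with zeros exactly at `i ≡ -r (mod 2)` -/
def xpar (r : ℤ) : ℤ → Bool := fun i => if (i + r) % 2 = 0 then false else true

lemma xpar_false_iff (r i : ℤ) : xpar r i = false ↔ (i + r) % 2 = 0 := by
  unfold xpar
  split_ifs with h
  · simpa using h
  · simpa using h

lemma xpar_mem (σ : ℕ → ℕ) (r : ℤ) : xpar r ∈ Xsig σ := by
  intro m hm ⟨i, h0, h1, h2⟩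
  rw [xpar_false_iff] at h0 h1
  have hmodd : m % 2 = 1 := by omega
  have hm1 : m ≠ 1 := fun h => hm (h ▸ one_mem_Ssig σ)
  have hm3 : 2 ≤ (m : ℤ) := by omega
  have := h2 2 (by omega) hm3
  rw [show xpar r (i + 2) = false from (xpar_false_iff r _).mpr (by omega)] at this
  exact absurd this (by simp)

lemma parity_contradiction (σ : ℕ → ℕ) (hσ : ∀ n, σ n = 2 ∨ σ n = 4)
    {x : ℤ → Bool} (hx : x ∈ Xsig σ) {k : ℤ} (h0 : x 0 = false) (hk : x k = false)
    (hodd : k % 2 ≠ 0) : False := by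
  rcases lt_trichotomy k 0 with h|h|h
  · have := zero_dist σ hσ hx (0 - k).toNat k 0 h (by omega) hk h0
    omega
  · omega
  · have := zero_dist σ hσ hx k.toNat 0 k h (by omega) h0 hk
    omega

lemma not_mixing (σ : ℕ → ℕ) (hσ : ∀ n, σ n = 2 ∨ σ n = 4) :
    ¬ TopologicallyMixingZ (Xsig σ) := by
  intro h
  obtain ⟨F, hF⟩ := h {0, 1} (xpar 0) (xpar_mem σ 0) (xpar 1) (xpar_mem σ 1)
  obtain ⟨n, -, hn⟩ := Set.infinite_univ (α := ℤ) |>.exists_notMem_finset F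
  obtain ⟨x, hxX, hx1, hx2⟩ := hF n hn
  have h0 : x 0 = false := by
    have := hx1 0 (by simp)
    rw [this]
    exact (xpar_false_iff 0 0).mpr (by omega)
  by_cases hpar : n % 2 = 0
  · have := hx2 1 (by simp)
    rw [show xpar 1 (n + 1) = false from (xpar_false_iff 1 _).mpr (by omega)] at this
    exact parity_contradiction σ hσ hxX h0 this (by omega)
  · have := hx2 0 (by simp)
    rw [add_zero] at this
    rw [show xpar 1 n = false from (xpar_false_iff 1 _).mpr (by omega)] at this
    exact parity_contradiction σ hσ hxX h0 this (by omega)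

lemma not_SI (σ : ℕ → ℕ) (hσ : ∀ n, σ n = 2 ∨ σ n = 4) :
    ¬ IsStronglyIrreducibleZ (Xsig σ) := by
  rintro ⟨Δ, hΔ⟩
  classical
  set G : Finset ℤ := (({0, 1} : Finset ℤ) ×ˢ Δ).image (fun p => p.1 - p.2) with hG
  set G' : Finset ℤ := G ∪ G.image (fun z => z - 1) with hG'
  obtain ⟨n, -, hn⟩ := Set.infinite_univ (α := ℤ) |>.exists_notMem_finset G'
  have hcond : ∀ a ∈ ({0, 1} : Finset ℤ), ∀ d ∈ Δ, a - d ∉ ({n, n + 1} : Finset ℤ) := by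
    intro a ha d hd hmem
    have haG : a - d ∈ G := Finset.mem_image.mpr ⟨(a, d), Finset.mem_product.mpr ⟨ha, hd⟩, rfl⟩
    rcases Finset.mem_insert.mp hmem with h|h
    · exact hn (Finset.mem_union.mpr (Or.inl (h ▸ haG)))
    · have : a - d = n + 1 := by simpa using h
      refine hn (Finset.mem_union.mpr (Or.inr ?_))
      exact Finset.mem_image.mpr ⟨a - d, haG, by omega⟩
  obtain ⟨x, hxX, hx1, hx2⟩ :=
    hΔ {0, 1} {n, n + 1} hcond (xpar 0) (xpar_mem σ 0) (xpar 1) (xpar_mem σ 1)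
  have h0 : x 0 = false := by
    have := hx1 0 (by simp)
    rw [this]
    exact (xpar_false_iff 0 0).mpr (by omega)
  by_cases hpar : n % 2 = 0
  · have := hx2 (n + 1) (by simp)
    rw [show xpar 1 (n + 1) = false from (xpar_false_iff 1 _).mpr (by omega)] at this
    exact parity_contradiction σ hσ hxX h0 this (by omega)
  · have := hx2 n (by simp)
    rw [show xpar 1 n = false from (xpar_false_iff 1 _).mpr (by omega)] at this
    exact parity_contradiction σ hσ hxX h0 this (by omega)

end WP
namespace WP

/-! ### countability of sofic subshifts -/

def SoficData : Type := Σ k : ℕ,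
  ((Σ Ω : Finset ℤ, Set ({i : ℤ // i ∈ Ω} → Fin k)) ×
   (Σ W : Finset ℤ, (({i : ℤ // i ∈ W} → Fin k) → Bool)))

instance : Countable SoficData := by unfold SoficData; infer_instance

def soficDecode : SoficData → Set (ℤ → Bool) := fun d =>
  (fun y : ℤ → Fin d.1 => fun n : ℤ =>
      d.2.2.2 (fun w : {i : ℤ // i ∈ d.2.2.1} => y (w.1 + n))) ''
    {y : ℤ → Fin d.1 | ∀ n : ℤ,
      (fun w : {i : ℤ // i ∈ d.2.1.1} => shiftZ n y w.1) ∈ d.2.1.2}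

lemma window_exists {B : Type} [Finite B] {Y : Set (ℤ → B)} {f : (ℤ → B) → (ℤ → Bool)}
    (hYc : @IsClosed _ (@Pi.topologicalSpace ℤ (fun _ => B) (fun _ => ⊥)) Y)
    (hfc : @ContinuousOn _ _ (@Pi.topologicalSpace ℤ (fun _ => B) (fun _ => ⊥)) _ f Y) :
    ∃ W : Finset ℤ, ∀ y ∈ Y, ∀ y' ∈ Y, (∀ i ∈ W, y i = y' i) → f y 0 = f y' 0 := by
  letI : TopologicalSpace B := ⊥
  haveI : DiscreteTopology B := ⟨rfl⟩
  have hYcomp : IsCompact Y := hYc.isCompact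
  have hfc0 : ContinuousOn (fun z => f z 0) Y :=
    (continuous_apply (0 : ℤ)).comp_continuousOn hfc
  have hloc : ∀ y ∈ Y, ∃ I : Finset ℤ, ∀ z ∈ Y, (∀ i ∈ I, z i = y i) → f z 0 = f y 0 := by
    intro y hy
    have hc : ContinuousWithinAt (fun z => f z 0) Y y := hfc0 y hy
    have hmem : {f y 0} ∈ nhds (f y 0) := (isOpen_discrete _).mem_nhds rfl
    have hpre : (fun z => f z 0) ⁻¹' {f y 0} ∈ nhdsWithin y Y := hc hmem
    obtain ⟨U, hUo, hyU, hUsub⟩ := mem_nhdsWithin.mp hpre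
    obtain ⟨I, u, hu, hsub⟩ := isOpen_pi_iff.mp hUo y hyU
    refine ⟨I, fun z hz hagree => ?_⟩
    have hzU : z ∈ U := by
      apply hsub
      intro i hi
      rw [hagree i hi]
      exact (hu i hi).2
    have := hUsub ⟨hzU, hz⟩
    simpa using this
  classical
  choose! I hI using hloc
  set V : ↥Y → Set (ℤ → B) := fun p => ⋂ i ∈ I p.1, {z : ℤ → B | z i = p.1 i} with hV
  have hVopen : ∀ p : ↥Y, IsOpen (V p) := by
    intro p
    refine isOpen_biInter_finset (fun i _ => ?_)
    have : {z : ℤ → B | z i = p.1 i} = (fun z : ℤ → B => z i) ⁻¹' {p.1 i} := rfl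
    rw [this]
    exact IsOpen.preimage (continuous_apply i) (isOpen_discrete _)
  have hcover : Y ⊆ ⋃ p : ↥Y, V p := by
    intro y hy
    refine Set.mem_iUnion.mpr ⟨⟨y, hy⟩, ?_⟩
    simp [hV]
  obtain ⟨t, ht⟩ := hYcomp.elim_finite_subcover V hVopen hcover
  refine ⟨t.sup (fun p => I p.1), ?_⟩
  intro y hy y' hy' hagree
  obtain ⟨p, hpt, hyV⟩ : ∃ p ∈ t, y ∈ V p := by
    have := ht hy
    simpa using this
  have hIsub : I p.1 ⊆ t.sup (fun p => I p.1) := by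
    have := Finset.le_sup (f := fun p : ↥Y => I p.1) hpt
    exact this
  have hyag : ∀ i ∈ I p.1, y i = p.1 i := by
    intro i hi
    have := Set.mem_iInter.mp hyV i
    have := Set.mem_iInter.mp this hi
    exact this
  have hy'ag : ∀ i ∈ I p.1, y' i = p.1 i := by
    intro i hi
    rw [← hagree i (hIsub hi)]
    exact hyag i hi
  rw [hI p.1 p.2 y hy hyag, hI p.1 p.2 y' hy' hy'ag]

lemma sofic_mem_range {X : Set (ℤ → Bool)} (hX : IsSoficZ X) :
    ∃ d : SoficData, soficDecode d = X := by
  classical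
  obtain ⟨B, hBfin, Y, f, hYsub, hYft, hfc, hfe, hfX⟩ := hX
  haveI := hBfin
  obtain ⟨Ω, P, hYeq⟩ := hYft
  obtain ⟨W, hW⟩ := window_exists hYsub.1 hfc
  set k := Nat.card B with hk
  set e : B ≃ Fin k := Finite.equivFin B with he
  set P' : Set ({i : ℤ // i ∈ Ω} → Fin k) :=
    (fun p : {i : ℤ // i ∈ Ω} → B => fun w => e (p w)) '' P with hP'
  set μ : ({i : ℤ // i ∈ W} → Fin k) → Bool := fun q =>
    if h : ∃ y, y ∈ Y ∧ ∀ w : {i : ℤ // i ∈ W}, e (y w.1) = q w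
    then f h.choose 0 else true with hμ
  refine ⟨⟨k, ⟨Ω, P'⟩, ⟨W, μ⟩⟩, ?_⟩
  show (fun y : ℤ → Fin k => fun n : ℤ => μ (fun w : {i : ℤ // i ∈ W} => y (w.1 + n))) ''
      {y : ℤ → Fin k | ∀ n : ℤ, (fun w : {i : ℤ // i ∈ Ω} => shiftZ n y w.1) ∈ P'} = X
  set G : (ℤ → Fin k) → (ℤ → Bool) :=
    fun y => fun n : ℤ => μ (fun w : {i : ℤ // i ∈ W} => y (w.1 + n)) with hG
  have step1 : {y : ℤ → Fin k | ∀ n : ℤ, (fun w : {i : ℤ // i ∈ Ω} => shiftZ n y w.1) ∈ P'}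
      = (fun y : ℤ → B => fun i => e (y i)) '' Y := by
    ext x
    constructor
    · intro hx
      refine ⟨fun i => e.symm (x i), ?_, ?_⟩
      · rw [hYeq]
        intro n
        obtain ⟨p, hp, hpe⟩ := hx n
        have : (fun w : {i : ℤ // i ∈ Ω} => shiftZ n (fun i => e.symm (x i)) w.1) = p := by
          funext w
          have := congrFun hpe w
          simp only at this
          show e.symm (x (w.1 - n)) = p w
          rw [show x (w.1 - n) = shiftZ n x w.1 from rfl, ← this]
          exact e.symm_apply_apply (p w)
        rw [this]
        exact hp
      · funext i
        exact e.apply_symm_apply (x i)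
    · rintro ⟨y, hy, rfl⟩
      intro n
      have hyP : (fun w : {i : ℤ // i ∈ Ω} => shiftZ n y w.1) ∈ P := by
        have := hYeq ▸ hy
        exact this n
      exact ⟨_, hyP, rfl⟩
  have step2 : ∀ y ∈ Y, G (fun i => e (y i)) = f y := by
    intro y hy
    funext n
    have hz : shiftZ (-n) y ∈ Y := hYsub.2 (-n) y hy
    have hq : ∃ y', y' ∈ Y ∧ ∀ w : {i : ℤ // i ∈ W},
        e (y' w.1) = (fun w : {i : ℤ // i ∈ W} => e (y (w.1 + n))) w := by
      refine ⟨shiftZ (-n) y, hz, fun w => ?_⟩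
      show e (y (w.1 - (-n))) = e (y (w.1 + n))
      rw [sub_neg_eq_add]
    have hGn : G (fun i => e (y i)) n = f hq.choose 0 := by
      show μ _ = _
      rw [hμ]
      exact dif_pos hq
    have hcY : hq.choose ∈ Y := hq.choose_spec.1
    have hcagree : ∀ i ∈ W, hq.choose i = shiftZ (-n) y i := by
      intro i hi
      have := hq.choose_spec.2 ⟨i, hi⟩
      simp only at this
      have : e (hq.choose i) = e (y (i + n)) := this
      have h2 : hq.choose i = y (i + n) := e.injective this
      rw [h2]
      show y (i + n) = y (i - (-n))
      rw [sub_neg_eq_add]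
    have hfz : f hq.choose 0 = f (shiftZ (-n) y) 0 := hW _ hcY _ hz hcagree
    have hfe' : f (shiftZ (-n) y) 0 = f y n := by
      rw [hfe (-n) y hy]
      show f y (0 - (-n)) = f y n
      norm_num
    rw [hGn, hfz, hfe']
  rw [step1, ← hfX, Set.image_image]
  exact Set.image_congr step2

lemma sofic_countable : {X : Set (ℤ → Bool) | IsSoficZ X}.Countable := by
  have hsub : {X : Set (ℤ → Bool) | IsSoficZ X} ⊆ Set.range soficDecode := by
    intro X hX
    obtain ⟨d, hd⟩ := sofic_mem_range hX
    exact ⟨d, hd⟩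
  exact (Set.countable_range soficDecode).mono hsub

end WP

namespace WP

lemma not_countable_funBool : ¬ Countable (ℕ → Bool) := by
  intro h
  obtain ⟨g, hg⟩ := exists_injective_nat (ℕ → Bool)
  have hsurj : Function.Surjective (Function.invFun g) := Function.invFun_surjective hg
  obtain ⟨n, hn⟩ := hsurj (fun m => ! Function.invFun g m m)
  have hcf := congrFun hn n
  cases hv : Function.invFun g n n with
  | true => rw [hv] at hcf; simp at hcf
  | false => rw [hv] at hcf; simp at hcf

end WP


/-- There are uncountably many W-subshifts of `{0,1}^ℤ` which are neither sofic nor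
strongly irreducible. Concretely: `σ ↦ X_σ` is injective on `{2,4}^ℕ`; each `X_σ` is a
subshift satisfying the W-condition with `n₀ = 3`, and is neither topologically mixing
nor strongly irreducible; only countably many of the `X_σ` are sofic; and hence there
is an uncountable family of such subshifts `X_σ`, all W-subshifts, none sofic and none
strongly irreducible. -/
theorem uncountably_many_W_not_sofic_not_strongly_irreducible :
    (∀ σ σ' : ℕ → ℕ, (∀ n, σ n = 2 ∨ σ n = 4) → (∀ n, σ' n = 2 ∨ σ' n = 4) →
      Xsig σ = Xsig σ' → σ = σ') ∧
    (∀ σ : ℕ → ℕ, (∀ n, σ n = 2 ∨ σ n = 4) →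
      IsSubshiftZ (Xsig σ) ∧
      (∀ u ∈ lang (Xsig σ), ∀ v ∈ lang (Xsig σ),
        ∃ c ∈ lang (Xsig σ), c.length ≤ 3 ∧ u ++ c ++ v ∈ lang (Xsig σ)) ∧
      ¬ TopologicallyMixingZ (Xsig σ) ∧ ¬ IsStronglyIrreducibleZ (Xsig σ)) ∧
    {Y : Set (ℤ → Bool) |
      (∃ σ : ℕ → ℕ, (∀ n, σ n = 2 ∨ σ n = 4) ∧ Y = Xsig σ) ∧ IsSoficZ Y}.Countable ∧
    ∃ S : Set (Set (ℤ → Bool)), ¬ S.Countable ∧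
      ∀ Y ∈ S, (∃ σ : ℕ → ℕ, (∀ n, σ n = 2 ∨ σ n = 4) ∧ Y = Xsig σ) ∧
        IsWSubshift Y ∧ ¬ IsSoficZ Y ∧ ¬ IsStronglyIrreducibleZ Y := by
  refine ⟨WP.injectivity, ?_, ?_, ?_⟩
  · intro σ hσ
    exact ⟨WP.Xsig_isSubshift σ, WP.W_prop σ hσ, WP.not_mixing σ hσ, WP.not_SI σ hσ⟩
  · exact WP.sofic_countable.mono (fun Y hY => hY.2)
  · refine ⟨{Y : Set (ℤ → Bool) |
      (∃ σ : ℕ → ℕ, (∀ n, σ n = 2 ∨ σ n = 4) ∧ Y = Xsig σ) ∧ ¬ IsSoficZ Y}, ?_, ?_⟩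
    · intro hc
      -- then the full family is countable
      have hT : {Y : Set (ℤ → Bool) |
          ∃ σ : ℕ → ℕ, (∀ n, σ n = 2 ∨ σ n = 4) ∧ Y = Xsig σ}.Countable := by
        have hsc : {Y : Set (ℤ → Bool) |
            (∃ σ : ℕ → ℕ, (∀ n, σ n = 2 ∨ σ n = 4) ∧ Y = Xsig σ) ∧ IsSoficZ Y}.Countable :=
          WP.sofic_countable.mono (fun Y hY => hY.2)
        refine Set.Countable.mono ?_ (hc.union hsc)
        intro Y hY
        by_cases hs : IsSoficZ Y
        · exact Or.inr ⟨hY, hs⟩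
        · exact Or.inl ⟨hY, hs⟩
      set emb : (ℕ → Bool) → Set (ℤ → Bool) :=
        fun b => Xsig (fun n => if b n then 2 else 4) with hemb
      have hembP : ∀ b : ℕ → Bool, ∀ n, (if b n then 2 else 4) = 2 ∨
          (if b n then 2 else 4) = 4 := by
        intro b n
        by_cases h : b n <;> simp [h]
      have hinj : Function.Injective emb := by
        intro b b' hbb
        have := WP.injectivity _ _ (hembP b) (hembP b') hbb
        funext n
        have := congrFun this n
        by_cases h : b n <;> by_cases h' : b' n <;> simp [h, h'] at this ⊢
      have hrange : (Set.range emb).Countable := by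
        refine hT.mono ?_
        rintro Y ⟨b, rfl⟩
        exact ⟨_, hembP b, rfl⟩
      haveI := hrange.to_subtype
      exact WP.not_countable_funBool
        (Countable.of_equiv _ (Equiv.ofInjective emb hinj).symm)
    · rintro Y ⟨⟨σ, hσ, rfl⟩, hns⟩
      exact ⟨⟨σ, hσ, rfl⟩, ⟨3, WP.W_prop σ hσ⟩, hns, WP.not_SI σ hσ⟩
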